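/- Let 𝕆ω be a field of omega-series in a log-atomic monomial T, and write g^† = g'/g. For every g ∈ 𝕆ω with g ≠ 0 and g^† ≻ 1/T (equivalently log|g| ≻ log T), we have (g/g')' ≺ 1, (g')^† ∼ g^†, and log|g'| ∼ log|g| ≻ log T. -/

import Mathlib

/-!
Interface axiomatization of fields of transseries and omega-series, following
Berarducci–Mantova.  We do not construct Hahn fields; instead we record, as a
structure, the properties of the field of omega-series `𝕆ω` in a log-atomic
monomial `T` (an ordered field containing `ℝ`, with `exp`/`log`, the class `J`
of purely infinite series, and the strongly `ℝ`-linear derivation `D`), and,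
as a second structure, the composition `f ∘ x` of omega-series `f` with
elements `x > ℝ` of a confluent field of transseries `𝕌` (confluence is
precisely what guarantees the existence of such a composition, which we take
as primitive data).
-/

/-- Dominance: `a ≼ b` iff `|a| ≤ n * |b|` for some natural number `n`. -/
def domLE {K : Type*} [Field K] [LinearOrder K] [IsStrictOrderedRing K] (a b : K) : Prop :=
  ∃ n : ℕ, |a| ≤ (n : K) * |b|

/-- `a ≺ b` iff `a ≼ b` and `¬ b ≼ a` (equivalently `n * |a| < |b|` for all `n`). -/
def domLT {K : Type*} [Field K] [LinearOrder K] [IsStrictOrderedRing K] (a b : K) : Prop :=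
  domLE a b ∧ ¬ domLE b a

/-- `a ≍ b` iff `a ≼ b` and `b ≼ a`. -/
def domEq {K : Type*} [Field K] [LinearOrder K] [IsStrictOrderedRing K] (a b : K) : Prop :=
  domLE a b ∧ domLE b a

/-- Asymptotic equivalence: `a ∼ b` iff `a - b ≺ a`. -/
def domSim {K : Type*} [Field K] [LinearOrder K] [IsStrictOrderedRing K] (a b : K) : Prop :=
  domLT (a - b) a

/-- `x > ℝ`: `x` is larger than every real number (via the embedding `emb`). -/
def gtReals {K : Type*} [Field K] [LinearOrder K] [IsStrictOrderedRing K] (emb : ℝ →+* K) (x : K) : Prop :=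
  ∀ r : ℝ, emb r < x

/-- Interface for a field of omega-series `𝕆ω` in a log-atomic monomial `T`:
an ordered field containing `ℝ`, equipped with `exp` and `log`, the
distinguished log-atomic element `T > ℝ`, the additive group `J` of purely
infinite series, and the strongly `ℝ`-linear derivation `D` determined by
`D T = 1` and `D (exp γ) = exp γ * D γ`. -/
structure OmegaFieldStruct (O : Type*) [Field O] [LinearOrder O] [IsStrictOrderedRing O] where
  /-- the embedding of the real numbers (series with a single constant term) -/
  emb : ℝ →+* O
  /-- the log-atomic monomial `T` -/
  T : O
  /-- the (total) exponential, inverse of `log` -/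
  exp : O → O
  /-- the logarithm (meaningful on positive elements) -/
  log : O → O
  /-- the class of purely infinite series -/
  J : Set O
  /-- the derivation -/
  D : O → O
  T_gt_reals : gtReals emb T
  exp_add : ∀ a b : O, exp (a + b) = exp a * exp b
  exp_pos : ∀ a : O, 0 < exp a
  exp_strictMono : StrictMono exp
  log_exp : ∀ a : O, log (exp a) = a
  exp_log : ∀ a : O, 0 < a → exp (log a) = a
  exp_emb : ∀ r : ℝ, exp (emb r) = emb (Real.exp r)
  /-- growth axiom: `(log 𝔪)^n < 𝔪`, extended to all positive infinite elements -/
  log_pow_lt : ∀ a : O, gtReals emb a → ∀ n : ℕ, (log a) ^ n < a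
  J_zero : (0 : O) ∈ J
  J_add : ∀ a ∈ J, ∀ b ∈ J, a + b ∈ J
  J_neg : ∀ a ∈ J, -a ∈ J
  /-- purely infinite series are either zero or dominate `1` -/
  J_infinite : ∀ γ ∈ J, γ ≠ 0 → domLT 1 γ
  /-- `T` is log-atomic: its iterated logarithms are monomials `> 1`,
  hence purely infinite -/
  logIter_T_mem_J : ∀ n : ℕ, (log)^[n] T ∈ J
  D_add : ∀ a b : O, D (a + b) = D a + D b
  D_mul : ∀ a b : O, D (a * b) = D a * b + a * D b
  D_T : D T = 1
  D_emb : ∀ r : ℝ, D (emb r) = 0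
  D_exp : ∀ a : O, D (exp a) = exp a * D a
  /-- the H-field property: positive infinite elements have positive derivative -/
  D_pos_of_gt_reals : ∀ a : O, gtReals emb a → 0 < D a
  /-- the constants of the derivation are exactly the reals -/
  D_eq_zero_iff : ∀ a : O, D a = 0 ↔ ∃ r : ℝ, a = emb r

/-- Interface for the composition of omega-series by elements `x > ℝ` of a
confluent field of transseries `U`: for each such `x`, `f ↦ comp f x` is the
unique strongly `ℝ`-linear ordered field embedding with `comp T x = x` and
`comp (exp γ) x = expU (comp γ x)`.  Confluence of `U` is what guarantees the
existence of this composition, which we take as primitive data. -/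
structure CompStruct (O U : Type*) [Field O] [LinearOrder O] [IsStrictOrderedRing O] [Field U] [LinearOrder U] [IsStrictOrderedRing U]
    (Ω : OmegaFieldStruct O) where
  /-- the embedding of the real numbers into `U` -/
  embU : ℝ →+* U
  /-- the exponential of `U` -/
  expU : U → U
  /-- the logarithm of `U` (meaningful on positive elements) -/
  logU : U → U
  /-- the composition `f ∘ x` of an omega-series `f` with `x ∈ U`,
  meaningful for `x > ℝ` -/
  comp : O → U → U
  expU_add : ∀ a b : U, expU (a + b) = expU a * expU b
  expU_pos : ∀ a : U, 0 < expU a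
  expU_strictMono : StrictMono expU
  logU_expU : ∀ a : U, logU (expU a) = a
  expU_logU : ∀ a : U, 0 < a → expU (logU a) = a
  comp_add : ∀ (f g : O) (x : U), gtReals embU x →
    comp (f + g) x = comp f x + comp g x
  comp_mul : ∀ (f g : O) (x : U), gtReals embU x →
    comp (f * g) x = comp f x * comp g x
  comp_emb : ∀ (r : ℝ) (x : U), gtReals embU x → comp (Ω.emb r) x = embU r
  comp_T : ∀ x : U, gtReals embU x → comp Ω.T x = x
  comp_exp : ∀ (f : O) (x : U), gtReals embU x →
    comp (Ω.exp f) x = expU (comp f x)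
  comp_log : ∀ (f : O) (x : U), gtReals embU x → 0 < f →
    comp (Ω.log f) x = logU (comp f x)
  /-- right composition is an ordered field embedding -/
  comp_strictMono : ∀ x : U, gtReals embU x → StrictMono fun f : O => comp f x

section DomLemmas
variable {K : Type*} [Field K] [LinearOrder K] [IsStrictOrderedRing K] {a b c x y z : K}

theorem domLE_of_abs_le (h : |a| ≤ |b|) : domLE a b := ⟨1, by simpa using h⟩

theorem domLE_total (a b : K) : domLE a b ∨ domLE b a := by
  rcases le_total |a| |b| with h | h
  · exact Or.inl (domLE_of_abs_le h)
  · exact Or.inr (domLE_of_abs_le h)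

theorem domLT_iff : domLT a b ↔ ∀ n : ℕ, (n : K) * |a| < |b| := by
  constructor
  · rintro ⟨-, h2⟩ n
    by_contra hc
    exact h2 ⟨n, not_lt.mp hc⟩
  · intro h
    refine ⟨⟨1, ?_⟩, ?_⟩
    · have := h 1
      push_cast at this ⊢
      linarith
    · rintro ⟨n, hn⟩
      exact absurd hn (not_le.mpr (h n))

theorem domLT_mul_right (h : domLT a b) (hc : c ≠ 0) : domLT (a * c) (b * c) := by
  rw [domLT_iff] at h ⊢
  intro n
  have hc' : 0 < |c| := abs_pos.mpr hc
  rw [abs_mul, abs_mul, ← mul_assoc]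
  exact mul_lt_mul_of_pos_right (h n) hc'

theorem domLT_add (hx : domLT x z) (hy : domLT y z) : domLT (x + y) z := by
  rw [domLT_iff] at *
  intro n
  have h1 := hx (2 * n)
  have h2 := hy (2 * n)
  push_cast at h1 h2
  have habs : |x + y| ≤ |x| + |y| := abs_add_le x y
  have hn : (0:K) ≤ (n:K) := Nat.cast_nonneg n
  nlinarith

theorem domLE_add_of_lt_of_le (hx : domLT x z) (hy : domLE y z) : domLE (x + y) z := by
  obtain ⟨n, hn⟩ := hy
  have h1 : |x| < |z| := by have := (domLT_iff.mp hx) 1; push_cast at this; linarith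
  refine ⟨n + 1, ?_⟩
  have habs : |x + y| ≤ |x| + |y| := abs_add_le x y
  push_cast
  linarith

theorem domLT_add_self (h : domLT a b) : domLT a (b + a) := by
  rw [domLT_iff] at h ⊢
  intro n
  have h1 := h (n + 1)
  push_cast at h1
  have : |b| ≤ |b + a| + |a| := by
    calc |b| = |(b + a) + (-a)| := by ring_nf
    _ ≤ |b + a| + |(-a)| := abs_add_le _ _
    _ = |b + a| + |a| := by rw [abs_neg]
  linarith

theorem domLT_trans (hab : domLT a b) (hbc : domLT b c) : domLT a c := by
  rw [domLT_iff] at *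
  intro n
  have h1 := hab n
  have h2 := hbc 1
  push_cast at h2
  linarith

theorem domLT_neg_left : domLT (-a) b ↔ domLT a b := by
  simp [domLT_iff]

end DomLemmas

section OmegaLemmas
variable {O : Type*} [Field O] [LinearOrder O] [IsStrictOrderedRing O] (Ω : OmegaFieldStruct O)

theorem emb_mono : Monotone Ω.emb := by
  intro r s h
  have h0 : 0 ≤ s - r := by linarith
  have : Ω.emb (s - r) = Ω.emb (Real.sqrt (s - r)) * Ω.emb (Real.sqrt (s - r)) := by
    rw [← map_mul, Real.mul_self_sqrt h0]
  have h1 : 0 ≤ Ω.emb (s - r) := this ▸ mul_self_nonneg _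
  have := map_sub Ω.emb s r
  linarith [this ▸ h1]

theorem emb_strictMono : StrictMono Ω.emb :=
  (emb_mono Ω).strictMono_of_injective Ω.emb.injective

theorem emb_pos {r : ℝ} (h : 0 < r) : 0 < Ω.emb r := by
  have := (emb_strictMono Ω) h
  simpa using this

theorem gtReals_pos {x : O} (h : gtReals Ω.emb x) : 0 < x := by
  have := h 0
  simpa using this

theorem gtReals_natCast {x : O} (h : gtReals Ω.emb x) (n : ℕ) : (n : O) < x := by
  have := h (n : ℝ)
  rwa [map_natCast] at this

theorem gtReals_of_natCast {x : O} (h : ∀ n : ℕ, (n : O) < x) : gtReals Ω.emb x := by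
  intro r
  rcases le_or_gt r 0 with hr | hr
  · have : Ω.emb r ≤ 0 := by
      have := emb_mono Ω hr
      simpa using this
    exact lt_of_le_of_lt this (by simpa using h 0)
  · have hrc : r ≤ (⌈r⌉₊ : ℝ) := Nat.le_ceil r
    calc Ω.emb r ≤ Ω.emb (⌈r⌉₊ : ℝ) := emb_mono Ω hrc
    _ = ((⌈r⌉₊ : ℕ) : O) := map_natCast _ _
    _ < x := h _

theorem exp_zero : Ω.exp 0 = 1 := by
  have h := Ω.exp_add 0 0
  have hp : 0 < Ω.exp 0 := Ω.exp_pos 0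
  have : Ω.exp 0 * 1 = Ω.exp 0 * Ω.exp 0 := by rw [mul_one]; simpa using h
  exact (mul_left_cancel₀ (ne_of_gt hp) this).symm

theorem exp_neg_mul (a : O) : Ω.exp (-a) * Ω.exp a = 1 := by
  rw [← Ω.exp_add, neg_add_cancel, exp_zero]

theorem log_one : Ω.log 1 = 0 := by
  have := Ω.log_exp 0
  rwa [exp_zero] at this

theorem log_mul {a b : O} (ha : 0 < a) (hb : 0 < b) :
    Ω.log (a * b) = Ω.log a + Ω.log b := by
  have : a * b = Ω.exp (Ω.log a + Ω.log b) := by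
    rw [Ω.exp_add, Ω.exp_log a ha, Ω.exp_log b hb]
  rw [this, Ω.log_exp]

theorem log_lt_log {a b : O} (ha : 0 < a) (hab : a < b) : Ω.log a < Ω.log b := by
  by_contra hc
  push_neg at hc
  have := Ω.exp_strictMono.monotone hc
  rw [Ω.exp_log a ha, Ω.exp_log b (lt_trans ha hab)] at this
  linarith

theorem log_inv {a : O} (ha : 0 < a) : Ω.log a⁻¹ = -Ω.log a := by
  have h := log_mul Ω ha (inv_pos.mpr ha)
  rw [mul_inv_cancel₀ (ne_of_gt ha), log_one] at h
  linarith

theorem gtReals_log {x : O} (h : gtReals Ω.emb x) : gtReals Ω.emb (Ω.log x) := by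
  intro r
  by_contra hc
  push_neg at hc
  have h1 := Ω.exp_strictMono.monotone hc
  rw [Ω.exp_log x (gtReals_pos Ω h), Ω.exp_emb] at h1
  exact absurd h1 (not_le.mpr (h (Real.exp r)))

theorem gtReals_exp {x : O} (h : gtReals Ω.emb x) : gtReals Ω.emb (Ω.exp x) := by
  intro r
  rcases le_or_gt r 0 with hr | hr
  · have h1 : Ω.emb r ≤ 0 := by have := emb_mono Ω hr; simpa using this
    exact lt_of_le_of_lt h1 (Ω.exp_pos x)
  · have : Ω.emb r = Ω.exp (Ω.emb (Real.log r)) := by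
      rw [Ω.exp_emb, Real.exp_log hr]
    rw [this]
    exact Ω.exp_strictMono (h (Real.log r))

theorem D_zero : Ω.D 0 = 0 := by
  have := Ω.D_add 0 0
  simpa using this

theorem D_one : Ω.D 1 = 0 := by
  have := Ω.D_mul 1 1
  simp at this
  linarith

theorem D_neg (a : O) : Ω.D (-a) = -Ω.D a := by
  have := Ω.D_add a (-a)
  rw [add_neg_cancel, D_zero] at this
  linarith

theorem D_emb_mul (r : ℝ) (a : O) : Ω.D (Ω.emb r * a) = Ω.emb r * Ω.D a := by
  rw [Ω.D_mul, Ω.D_emb]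
  ring

theorem D_natCast_mul (n : ℕ) (a : O) : Ω.D ((n : O) * a) = (n : O) * Ω.D a := by
  have h : ((n : O)) = Ω.emb (n : ℝ) := (map_natCast Ω.emb n).symm
  rw [h, D_emb_mul]

theorem D_inv {a : O} (ha : a ≠ 0) : Ω.D a⁻¹ = -Ω.D a / a ^ 2 := by
  have h := Ω.D_mul a a⁻¹
  rw [mul_inv_cancel₀ ha, D_one] at h
  field_simp at h ⊢
  linarith [h]

theorem D_div (a : O) {b : O} (hb : b ≠ 0) :
    Ω.D (a / b) = (Ω.D a * b - a * Ω.D b) / b ^ 2 := by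
  rw [div_eq_mul_inv, Ω.D_mul, D_inv Ω hb]
  field_simp
  ring

theorem D_log {a : O} (ha : 0 < a) : Ω.D (Ω.log a) = Ω.D a / a := by
  have h := Ω.D_exp (Ω.log a)
  rw [Ω.exp_log a ha] at h
  field_simp
  linarith

theorem D_abs_div {a : O} (ha : a ≠ 0) : Ω.D |a| / |a| = Ω.D a / a := by
  rcases abs_choice a with h | h
  · rw [h]
  · rw [h, D_neg]
    rw [neg_div_neg_eq]

theorem abs_D_abs (a : O) : |Ω.D (|a|)| = |Ω.D a| := by
  rcases abs_choice a with h | h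
  · rw [h]
  · rw [h, D_neg, abs_neg]

theorem D_log_abs {a : O} (ha : a ≠ 0) : Ω.D (Ω.log |a|) = Ω.D a / a := by
  rw [D_log Ω (abs_pos.mpr ha), D_abs_div Ω ha]

end OmegaLemmas

section KeyLemmas
variable {O : Type*} [Field O] [LinearOrder O] [IsStrictOrderedRing O] (Ω : OmegaFieldStruct O)

/-- H2: a bounded element is a real constant plus an infinitesimal. -/
theorem exists_const_add_small {h : O} (hb : domLE h 1) :
    ∃ (c : ℝ) (ε : O), h = Ω.emb c + ε ∧ domLT ε 1 := by
  obtain ⟨n, hn⟩ := hb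
  rw [abs_one, mul_one] at hn
  have hcast : ∀ m : ℕ, ((m : ℕ) : O) = Ω.emb (m : ℝ) := fun m => (map_natCast Ω.emb m).symm
  set S : Set ℝ := {r : ℝ | Ω.emb r < h} with hS
  have hne : S.Nonempty := by
    refine ⟨-(n + 1), ?_⟩
    have h1 : Ω.emb (-(n + 1 : ℝ)) = -((n : O) + 1) := by
      rw [map_neg]
      push_cast
      rw [map_add, map_natCast, map_one]
    have h2 : -|h| ≤ h := neg_abs_le h
    simp only [hS, Set.mem_setOf_eq]
    rw [h1]
    have : -((n : O) + 1) < -(n : O) := by linarith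
    linarith
  have hbdd : BddAbove S := by
    refine ⟨(n : ℝ) + 1, fun r hr => ?_⟩
    simp only [hS, Set.mem_setOf_eq] at hr
    by_contra hc
    push_neg at hc
    have : Ω.emb ((n : ℝ) + 1) ≤ Ω.emb r := emb_mono Ω (le_of_lt hc)
    have h1 : Ω.emb ((n : ℝ) + 1) = (n : O) + 1 := by
      rw [map_add, map_natCast, map_one]
    have h2 : h ≤ |h| := le_abs_self h
    rw [h1] at this
    linarith
  set c := sSup S with hc
  refine ⟨c, h - Ω.emb c, by ring, ?_⟩
  have hsmall : ∀ δ : ℝ, 0 < δ → |h - Ω.emb c| ≤ Ω.emb δ := by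
    intro δ hδ
    rw [abs_le]
    constructor
    · -- emb (c - δ) < h
      obtain ⟨r, hrS, hrlt⟩ := exists_lt_of_lt_csSup hne (show c - δ < c by linarith)
      have h1 : Ω.emb (c - δ) < Ω.emb r := emb_strictMono Ω hrlt
      have h2 : Ω.emb r < h := hrS
      have h3 : Ω.emb (c - δ) = Ω.emb c - Ω.emb δ := map_sub _ _ _
      linarith
    · -- h ≤ emb (c + δ)
      have h1 : h ≤ Ω.emb (c + δ) := by
        by_contra hcon
        push_neg at hcon
        have : c + δ ∈ S := hcon
        have := le_csSup hbdd this
        linarith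
      have h3 : Ω.emb (c + δ) = Ω.emb c + Ω.emb δ := map_add _ _ _
      linarith
  rw [domLT_iff]
  intro m
  have h1 := hsmall (1 / (2 * ((m : ℝ) + 1))) (by positivity)
  rw [abs_one]
  have h2 : (m : O) * |h - Ω.emb c| ≤ (m : O) * Ω.emb (1 / (2 * ((m : ℝ) + 1))) := by
    apply mul_le_mul_of_nonneg_left h1 (Nat.cast_nonneg m)
  have h3 : (m : O) * Ω.emb (1 / (2 * ((m : ℝ) + 1))) = Ω.emb ((m : ℝ) * (1 / (2 * ((m : ℝ) + 1)))) := by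
    rw [map_mul, map_natCast]
  have h4 : ((m : ℝ) * (1 / (2 * ((m : ℝ) + 1)))) < 1 := by
    rw [mul_one_div, div_lt_one (by positivity)]
    linarith
  have h5 : Ω.emb ((m : ℝ) * (1 / (2 * ((m : ℝ) + 1)))) < 1 := by
    have := emb_strictMono Ω h4
    rwa [map_one] at this
  linarith

/-- Key Lemma 1: if `ε ≺ 1` then `ε' ≺ u† = u'/u` for every `u > ℝ`. -/
theorem D_small_lt_dagger {u ε : O} (hu : gtReals Ω.emb u) (hε : domLT ε 1) :
    domLT (Ω.D ε) (Ω.D u / u) := by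
  have hL : gtReals Ω.emb (Ω.log u) := gtReals_log Ω hu
  have hε1 : |ε| < 1 := by
    have := (domLT_iff.mp hε) 1
    push_cast at this
    simpa using this
  have key : ∀ n : ℕ, (n : O) * |Ω.D ε| < Ω.D (Ω.log u) := by
    intro n
    have hbound : |(n : O) * ε| ≤ (n : O) := by
      rw [abs_mul, abs_of_nonneg (Nat.cast_nonneg (α := O) n)]
      nlinarith [Nat.cast_nonneg (α := O) n, abs_nonneg ε]
    have hgt : ∀ s : O, |s| ≤ (n : O) → gtReals Ω.emb (Ω.log u + s) := by
      intro s hs r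
      have h1 : Ω.emb (r + n) < Ω.log u := hL (r + n)
      have h2 : Ω.emb (r + n) = Ω.emb r + (n : O) := by
        rw [map_add, map_natCast]
      have h3 : -(n : O) ≤ s := neg_le_of_abs_le hs
      linarith
    have hp1 := Ω.D_pos_of_gt_reals _ (hgt ((n : O) * ε) hbound)
    have hp2 := Ω.D_pos_of_gt_reals _ (hgt (-((n : O) * ε)) (by rwa [abs_neg]))
    rw [Ω.D_add, D_natCast_mul] at hp1
    rw [Ω.D_add, D_neg, D_natCast_mul] at hp2
    rcases abs_cases (Ω.D ε) with ⟨h, -⟩ | ⟨h, -⟩ <;> rw [h] <;> nlinarith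
  rw [domLT_iff]
  intro n
  have h1 := key n
  have h2 : Ω.D (Ω.log u) = Ω.D u / u := D_log Ω (gtReals_pos Ω hu)
  have h3 : 0 < Ω.D u / u := by
    rw [← h2]
    have := key 0
    simpa using this
  rw [abs_of_pos h3]
  linarith [h2 ▸ h1]

/-- Key Lemma 2 (strict): if `f ≺ g` and `g ≻ 1` then `f' ≺ g'`. -/
theorem D_lt_of_domLT {f g : O} (hfg : domLT f g) (hg : domLT 1 g) :
    domLT (Ω.D f) (Ω.D g) := by
  have hgabs : gtReals Ω.emb |g| := by
    apply gtReals_of_natCast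
    intro n
    have := (domLT_iff.mp hg) n
    simpa using this
  have hg0 : g ≠ 0 := by
    intro h
    have := gtReals_pos Ω hgabs
    rw [h] at this
    simp at this
  have hDg : 0 < Ω.D |g| := Ω.D_pos_of_gt_reals _ hgabs
  have hDg0 : Ω.D g ≠ 0 := by
    intro h
    have := abs_D_abs Ω g
    rw [h, abs_zero, abs_eq_zero] at this
    linarith [this ▸ hDg]
  set h := f / g with hh
  have hfhg : f = h * g := by rw [hh, div_mul_cancel₀ _ hg0]
  have hh1 : domLT h 1 := by
    rw [domLT_iff]
    intro n
    have h1 := (domLT_iff.mp hfg) n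
    rw [abs_one, hh, abs_div]
    rw [← mul_div_assoc, div_lt_one (abs_pos.mpr hg0)]
    exact h1
  have hdh : domLT (Ω.D h) (Ω.D g / g) := by
    have := D_small_lt_dagger Ω hgabs hh1
    rwa [D_abs_div Ω hg0] at this
  have t1 : domLT (Ω.D h * g) (Ω.D g) := by
    have := domLT_mul_right hdh hg0
    rwa [div_mul_cancel₀ _ hg0] at this
  have t2 : domLT (h * Ω.D g) (Ω.D g) := by
    have := domLT_mul_right hh1 hDg0
    rwa [one_mul] at this
  have : Ω.D f = Ω.D h * g + h * Ω.D g := by rw [hfhg, Ω.D_mul]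
  rw [this]
  exact domLT_add t1 t2

/-- Key Lemma 2' (weak): if `f ≼ g` and `g ≻ 1` then `f' ≼ g'`. -/
theorem D_le_of_domLE {f g : O} (hfg : domLE f g) (hg : domLT 1 g) :
    domLE (Ω.D f) (Ω.D g) := by
  have hgabs : gtReals Ω.emb |g| := by
    apply gtReals_of_natCast
    intro n
    have := (domLT_iff.mp hg) n
    simpa using this
  have hg0 : g ≠ 0 := by
    intro h
    have := gtReals_pos Ω hgabs
    rw [h] at this
    simp at this
  set h := f / g with hh
  have hfhg : f = h * g := by rw [hh, div_mul_cancel₀ _ hg0]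
  have hh1 : domLE h 1 := by
    obtain ⟨n, hn⟩ := hfg
    refine ⟨n, ?_⟩
    rw [abs_one, mul_one, hh, abs_div, div_le_iff₀ (abs_pos.mpr hg0)]
    linarith [hn]
  obtain ⟨c, ε, hce, hεs⟩ := exists_const_add_small Ω hh1
  have hDh : Ω.D h = Ω.D ε := by
    rw [hce, Ω.D_add, Ω.D_emb, zero_add]
  have hdh : domLT (Ω.D h) (Ω.D g / g) := by
    rw [hDh]
    have := D_small_lt_dagger Ω hgabs hεs
    rwa [D_abs_div Ω hg0] at this
  have t1 : domLT (Ω.D h * g) (Ω.D g) := by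
    have := domLT_mul_right hdh hg0
    rwa [div_mul_cancel₀ _ hg0] at this
  have t2 : domLE (h * Ω.D g) (Ω.D g) := by
    obtain ⟨n, hn⟩ := hh1
    rw [abs_one, mul_one] at hn
    exact ⟨n, by rw [abs_mul]; nlinarith [abs_nonneg (Ω.D g), Nat.cast_nonneg (α := O) n]⟩
  have : Ω.D f = Ω.D h * g + h * Ω.D g := by rw [hfhg, Ω.D_mul]
  rw [this]
  exact domLE_add_of_lt_of_le t1 t2

end KeyLemmas

set_option maxHeartbeats 1000000 in
/-- For every `g ∈ 𝕆ω` with `g ≠ 0` and `g^† ≻ 1/T` (equivalently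
`log|g| ≻ log T`, where `g^† = g'/g`), we have `(g/g')' ≺ 1`,
`(g')^† ∼ g^†`, and `log|g'| ∼ log|g| ≻ log T`. -/
theorem statement14 {O : Type*} [Field O] [LinearOrder O] [IsStrictOrderedRing O]
    (Ω : OmegaFieldStruct O) (g : O) (hg : g ≠ 0)
    (hdag : domLT (1 / Ω.T) (Ω.D g / g)) :
    domLT (Ω.D (g / Ω.D g)) 1 ∧
    domSim (Ω.D (Ω.D g) / Ω.D g) (Ω.D g / g) ∧
    domSim (Ω.log |Ω.D g|) (Ω.log |g|) ∧
    domLT (Ω.log Ω.T) (Ω.log |g|) := by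
  set φ := Ω.D g / g with hφdef
  set ψ := Ω.log |g| with hψdef
  clear_value φ ψ
  have hT : gtReals Ω.emb Ω.T := Ω.T_gt_reals
  have hT0 : 0 < Ω.T := gtReals_pos Ω hT
  have hT1 : 1 < Ω.T := by have := hT 1; rwa [map_one] at this
  have hLT : gtReals Ω.emb (Ω.log Ω.T) := gtReals_log Ω hT
  have hLT0 : 0 < Ω.log Ω.T := gtReals_pos Ω hLT
  have hDlogT : Ω.D (Ω.log Ω.T) = 1 / Ω.T := by
    rw [D_log Ω hT0, Ω.D_T]
  have hLT1 : domLT 1 (Ω.log Ω.T) := by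
    rw [domLT_iff]
    intro n
    rw [abs_one, mul_one, abs_of_pos hLT0]
    exact gtReals_natCast Ω hLT n
  have hφne : φ ≠ 0 := by
    intro h
    exact hdag.2 ⟨0, by simp [h]⟩
  have hφabs0 : 0 < |φ| := abs_pos.mpr hφne
  have hDg0 : Ω.D g ≠ 0 := by
    intro h
    apply hφne
    rw [hφdef, h, zero_div]
  have hψD : Ω.D ψ = φ := by
    rw [hψdef, hφdef]
    exact D_log_abs Ω hg
  -- Step 2 : `log |g| ≻ log T`
  have hB : domLT (Ω.log Ω.T) ψ := by
    have hnle : ¬ domLE ψ (Ω.log Ω.T) := by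
      intro hle
      have h1 := D_le_of_domLE Ω hle hLT1
      rw [hψD, hDlogT] at h1
      exact hdag.2 h1
    rcases domLE_total ψ (Ω.log Ω.T) with h | h
    · exact absurd h hnle
    · exact ⟨h, hnle⟩
  have hψ1 : domLT 1 ψ := domLT_trans hLT1 hB
  have hψabs : gtReals Ω.emb |ψ| := by
    apply gtReals_of_natCast
    intro n
    have := (domLT_iff.mp hψ1) n
    simpa using this
  have hψne : ψ ≠ 0 := by
    intro h
    have := gtReals_pos Ω hψabs
    rw [h] at this
    simp at this
  have hφInvT : 1 / Ω.T < |φ| := by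
    have h1 := (domLT_iff.mp hdag) 1
    rw [abs_of_pos (show (0:O) < 1 / Ω.T by positivity)] at h1
    push_cast at h1
    linarith
  have hlogφlb : -Ω.log Ω.T < Ω.log |φ| := by
    have h1 := log_lt_log Ω (show (0:O) < 1 / Ω.T by positivity) hφInvT
    rw [one_div, log_inv Ω hT0] at h1
    exact h1
  -- Step 3 : `log |φ| ≺ ψ`
  have hC : domLT (Ω.log |φ|) ψ := by
    rw [domLT_iff]
    intro n
    rcases Nat.eq_zero_or_pos n with h0 | hn1
    · simpa [h0] using abs_pos.mpr hψne
    rcases le_or_gt (Ω.log |φ|) 0 with hneg | hpos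
    · have habs : abs (Ω.log |φ|) < Ω.log Ω.T := by
        rw [abs_of_nonpos hneg]
        linarith
      have h1 := (domLT_iff.mp hB) n
      rw [abs_of_pos hLT0] at h1
      have h2 : (n : O) * abs (Ω.log |φ|) ≤ (n : O) * Ω.log Ω.T :=
        mul_le_mul_of_nonneg_left habs.le (Nat.cast_nonneg n)
      linarith
    · by_contra hcon
      push_neg at hcon
      rw [abs_of_pos hpos] at hcon
      set s : ℝ := (2 * (n : ℝ))⁻¹ with hs
      have hn0 : (0:ℝ) < (n : ℝ) := by exact_mod_cast hn1
      have hs0 : 0 < s := by rw [hs]; positivity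
      set ρ := Ω.emb s * |ψ| with hρ
      have hρgt : gtReals Ω.emb ρ := by
        intro r
        have h1 : Ω.emb (r / s) < |ψ| := hψabs (r / s)
        have h2 : Ω.emb s * Ω.emb (r / s) < Ω.emb s * |ψ| :=
          mul_lt_mul_of_pos_left h1 (emb_pos Ω hs0)
        rw [← map_mul] at h2
        have h3 : s * (r / s) = r := by field_simp
        rwa [h3] at h2
      have h2ρ : ρ + ρ ≤ Ω.log |φ| := by
        have e1 : Ω.emb s * |ψ| ≤ Ω.emb s * ((n : O) * Ω.log |φ|) :=
          mul_le_mul_of_nonneg_left hcon (le_of_lt (emb_pos Ω hs0))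
        have e0 : Ω.emb s * (n : O) + Ω.emb s * (n : O) = 1 := by
          rw [show ((n : O)) = Ω.emb (n : ℝ) from (map_natCast _ _).symm, ← map_mul, ← map_add,
            ← map_one Ω.emb]
          congr 1
          rw [hs]
          field_simp
          ring
        have e2 : Ω.emb s * ((n : O) * Ω.log |φ|) + Ω.emb s * ((n : O) * Ω.log |φ|)
            = Ω.log |φ| := by
          calc Ω.emb s * ((n : O) * Ω.log |φ|) + Ω.emb s * ((n : O) * Ω.log |φ|)
              = (Ω.emb s * (n : O) + Ω.emb s * (n : O)) * Ω.log |φ| := by ring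
          _ = Ω.log |φ| := by rw [e0, one_mul]
        rw [hρ]
        linarith
      set E := Ω.exp ρ with hE
      have hE0 : 0 < E := Ω.exp_pos ρ
      have hEgt : gtReals Ω.emb E := gtReals_exp Ω hρgt
      set F := Ω.exp (-ρ) with hF
      have hF0 : 0 < F := Ω.exp_pos _
      have hFE : F * E = 1 := exp_neg_mul Ω ρ
      have hφE : E * E ≤ |φ| := by
        have h1 := Ω.exp_strictMono.monotone h2ρ
        rwa [Ω.exp_add, Ω.exp_log _ hφabs0] at h1
      have hFsmall : domLT F 1 := by
        rw [domLT_iff]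
        intro m
        rw [abs_one, abs_of_pos hF0]
        calc (m : O) * F < E * F := mul_lt_mul_of_pos_right (gtReals_natCast Ω hEgt m) hF0
        _ = 1 := by rw [mul_comm]; exact hFE
      have hDF : Ω.D F = F * -(Ω.D ρ) := by
        rw [hF, Ω.D_exp, D_neg]
      have hDρabs : |Ω.D ρ| = Ω.emb s * |φ| := by
        rw [hρ, D_emb_mul, abs_mul, abs_of_pos (emb_pos Ω hs0), abs_D_abs, hψD]
      have hDFabs : 1 < |Ω.D F| := by
        rw [hDF, abs_mul, abs_neg, hDρabs, abs_of_pos hF0]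
        have e1 : Ω.emb s * (E * E) ≤ Ω.emb s * |φ| :=
          mul_le_mul_of_nonneg_left hφE (emb_pos Ω hs0).le
        have e2 : F * (Ω.emb s * (E * E)) = Ω.emb s * E := by
          calc F * (Ω.emb s * (E * E)) = Ω.emb s * E * (F * E) := by ring
          _ = Ω.emb s * E := by rw [hFE, mul_one]
        have e3 : Ω.emb s⁻¹ < E := hEgt s⁻¹
        have e4 : Ω.emb s * Ω.emb s⁻¹ < Ω.emb s * E :=
          mul_lt_mul_of_pos_left e3 (emb_pos Ω hs0)
        have e5 : Ω.emb s * Ω.emb s⁻¹ = 1 := by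
          rw [← map_mul, mul_inv_cancel₀ (ne_of_gt hs0), map_one]
        nlinarith [hF0]
      have hlem := D_small_lt_dagger Ω hT hFsmall
      rw [Ω.D_T] at hlem
      have h1 := (domLT_iff.mp hlem) 1
      push_cast at h1
      rw [one_mul, abs_of_pos (show (0:O) < 1 / Ω.T by positivity)] at h1
      have h3 : 1 / Ω.T < 1 := by rw [div_lt_one hT0]; exact hT1
      linarith
  -- Step 4 : `φ† ≺ φ`
  have hA : domLT (Ω.D φ / φ) φ := by
    have hDlogφ : Ω.D (Ω.log |φ|) = Ω.D φ / φ := D_log_abs Ω hφne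
    have h1 := D_lt_of_domLT Ω hC hψ1
    rwa [hDlogφ, hψD] at h1
  -- Assemble the four conclusions
  have hDgeq : Ω.D g = g * φ := by
    rw [hφdef]
    field_simp
  refine ⟨?_, ?_, ?_, hB⟩
  · -- `(g/g')' ≺ 1`
    have h1 : domLT ((Ω.D φ / φ) * φ⁻¹) (φ * φ⁻¹) := domLT_mul_right hA (inv_ne_zero hφne)
    rw [mul_inv_cancel₀ hφne] at h1
    have h2 : Ω.D (g / Ω.D g) = -((Ω.D φ / φ) * φ⁻¹) := by
      rw [D_div Ω g hDg0, hφdef, D_div Ω (Ω.D g) hg]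
      field_simp
      ring
    rw [h2, domLT_neg_left]
    exact h1
  · -- `(g')† ∼ g†`
    have heq : Ω.D (Ω.D g) / Ω.D g = φ + Ω.D φ / φ := by
      rw [hφdef, D_div Ω (Ω.D g) hg]
      field_simp
      ring
    show domLT (Ω.D (Ω.D g) / Ω.D g - φ) (Ω.D (Ω.D g) / Ω.D g)
    rw [heq]
    simpa [add_sub_cancel_left] using domLT_add_self hA
  · -- `log |g'| ∼ log |g|`
    have hlogDg : Ω.log |Ω.D g| = ψ + Ω.log |φ| := by
      rw [hDgeq, abs_mul, log_mul Ω (abs_pos.mpr hg) hφabs0, hψdef]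
    show domLT (Ω.log |Ω.D g| - ψ) (Ω.log |Ω.D g|)
    rw [hlogDg]
    simpa [add_sub_cancel_left] using domLT_add_self hC
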